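/- Let σ ∈ Λ²₊V be a unit vector and V′ ∈ Λ²₊V with ⟨V′,σ⟩ = 0. Then for all X, Y ∈ V: ⟨σ×V′, X∧(K_σY)⟩ = ⟨σ×V′, (K_σX)∧Y⟩ = ⟨V′, X∧Y⟩ (identity (5) of the paper). -/

import Mathlib

open scoped RealInnerProductSpace

/-- Auxiliary coefficient matrix for inner products of a self-dual element with basis wedges. -/
def stmt4cmat (x1 x2 x3 : ℝ) : Matrix (Fin 4) (Fin 4) ℝ :=
  !![0, x1, x2, x3; -x1, 0, x3, -x2; -x2, -x3, 0, x1; -x3, x2, -x1, 0]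

set_option maxHeartbeats 4000000 in
/-- Let `V` be a 4-dimensional oriented real inner product space, `⋆` the
Hodge star on `Λ²V`, `Λ²₊V` its `(+1)`-eigenspace with the cross product `×` (characterized
on the frames `(s₁,s₂,s₃)` coming from positively oriented orthonormal bases of `V`).
Let `σ ∈ Λ²₊V` be a unit vector and `V′ ∈ Λ²₊V` with `⟨V′,σ⟩ = 0`.  Then for all `X, Y ∈ V`:
`⟨σ×V′, X∧(K_σY)⟩ = ⟨σ×V′, (K_σX)∧Y⟩ = ⟨V′, X∧Y⟩`. -/
theorem stmt_4 {V L : Type*}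
    [NormedAddCommGroup V] [InnerProductSpace ℝ V]
    [NormedAddCommGroup L] [InnerProductSpace ℝ L]
    (h4 : Module.finrank ℝ V = 4)
    (o : Orientation ℝ V (Fin 4))
    (wedge : V →ₗ[ℝ] V →ₗ[ℝ] L)
    (wedge_self : ∀ v : V, wedge v v = 0)
    (wedge_span : Submodule.span ℝ {x : L | ∃ u v : V, wedge u v = x} = ⊤)
    (inner_wedge : ∀ v₁ v₂ v₃ v₄ : V,
      ⟪wedge v₁ v₂, wedge v₃ v₄⟫ =
        (1 / 2) * (⟪v₁, v₃⟫ * ⟪v₂, v₄⟫ - ⟪v₁, v₄⟫ * ⟪v₂, v₃⟫))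
    (hodge : L →ₗ[ℝ] L)
    (hodge_hodge : ∀ x : L, hodge (hodge x) = x)
    (hodge_wedge : ∀ b : OrthonormalBasis (Fin 4) ℝ V, b.toBasis.orientation = o →
      hodge (wedge (b 0) (b 1)) = wedge (b 2) (b 3) ∧
      hodge (wedge (b 0) (b 2)) = wedge (b 3) (b 1) ∧
      hodge (wedge (b 0) (b 3)) = wedge (b 1) (b 2))
    (cross : L →ₗ[ℝ] L →ₗ[ℝ] L)
    (hcross_basis : ∀ b : OrthonormalBasis (Fin 4) ℝ V, b.toBasis.orientation = o →
      cross (wedge (b 0) (b 1) + wedge (b 2) (b 3)) (wedge (b 0) (b 2) + wedge (b 3) (b 1))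
          = wedge (b 0) (b 3) + wedge (b 1) (b 2) ∧
      cross (wedge (b 0) (b 2) + wedge (b 3) (b 1)) (wedge (b 0) (b 3) + wedge (b 1) (b 2))
          = wedge (b 0) (b 1) + wedge (b 2) (b 3) ∧
      cross (wedge (b 0) (b 3) + wedge (b 1) (b 2)) (wedge (b 0) (b 1) + wedge (b 2) (b 3))
          = wedge (b 0) (b 2) + wedge (b 3) (b 1))
    (hcross_antisymm : ∀ x y : L, hodge x = x → hodge y = y → cross x y = -cross y x)
    (σ : L) (hσ : hodge σ = σ) (hσ1 : ‖σ‖ = 1)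
    (V' : L) (hV' : hodge V' = V') (hV'σ : ⟪V', σ⟫ = 0)
    (K : V →ₗ[ℝ] V)
    (hK : ∀ X Y : V, ⟪K X, Y⟫ = 2 * ⟪σ, wedge X Y⟫) :
    ∀ X Y : V,
      ⟪cross σ V', wedge X (K Y)⟫ = ⟪V', wedge X Y⟫ ∧
      ⟪cross σ V', wedge (K X) Y⟫ = ⟪V', wedge X Y⟫ := by
  obtain ⟨b, hb⟩ : ∃ b : OrthonormalBasis (Fin 4) ℝ V, b.toBasis.orientation = o :=
    ⟨o.finOrthonormalBasis (by norm_num) h4, o.finOrthonormalBasis_orientation _ _⟩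
  have he : ∀ i j : Fin 4, ⟪b i, b j⟫ = if i = j then 1 else 0 := fun i j => by
    have := b.orthonormal; rw [orthonormal_iff_ite] at this; simpa using this i j
  have hw : ∀ i j k l : Fin 4, ⟪wedge (b i) (b j), wedge (b k) (b l)⟫ =
      (1/2) * ((if i = k then (1:ℝ) else 0) * (if j = l then 1 else 0)
        - (if i = l then (1:ℝ) else 0) * (if j = k then 1 else 0)) := by
    intro i j k l; rw [inner_wedge]; simp [he]
  have wskew : ∀ u v : V, wedge u v = - wedge v u := by
    intro u v
    have h := wedge_self (u + v)
    simp only [map_add, LinearMap.add_apply, wedge_self] at h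
    rw [zero_add, add_zero] at h
    exact eq_neg_of_add_eq_zero_right h
  -- the six basis wedges reproduce every element of `L`
  set T : L →ₗ[ℝ] L :=
      (2:ℝ) • (innerₛₗ ℝ (wedge (b 0) (b 1))).smulRight (wedge (b 0) (b 1))
    + (2:ℝ) • (innerₛₗ ℝ (wedge (b 0) (b 2))).smulRight (wedge (b 0) (b 2))
    + (2:ℝ) • (innerₛₗ ℝ (wedge (b 0) (b 3))).smulRight (wedge (b 0) (b 3))
    + (2:ℝ) • (innerₛₗ ℝ (wedge (b 1) (b 2))).smulRight (wedge (b 1) (b 2))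
    + (2:ℝ) • (innerₛₗ ℝ (wedge (b 3) (b 1))).smulRight (wedge (b 3) (b 1))
    + (2:ℝ) • (innerₛₗ ℝ (wedge (b 2) (b 3))).smulRight (wedge (b 2) (b 3)) with hTdef
  have hext : wedge.compr₂ T = wedge := by
    refine b.toBasis.ext fun i => b.toBasis.ext fun j => ?_
    simp only [OrthonormalBasis.coe_toBasis, LinearMap.compr₂_apply]
    fin_cases i <;> fin_cases j <;>
      simp [hTdef, LinearMap.add_apply, LinearMap.smul_apply,
        LinearMap.smulRight_apply, innerₛₗ_apply_apply, hw, wedge_self, -inner_self_eq_norm_sq_to_K] <;>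
      first
        | rfl
        | module
        | (rw [wskew]; module)
  have hTid : ∀ x : L, T x = x := by
    have : T = LinearMap.id := by
      apply LinearMap.ext_on wedge_span
      rintro x ⟨u, v, rfl⟩
      have := DFunLike.congr_fun (DFunLike.congr_fun hext u) v
      simpa [LinearMap.compr₂_apply] using this
    intro x; rw [this]; rfl
  have expand : ∀ x : L,
      x = (2 * ⟪wedge (b 0) (b 1), x⟫) • wedge (b 0) (b 1)
        + (2 * ⟪wedge (b 0) (b 2), x⟫) • wedge (b 0) (b 2)
        + (2 * ⟪wedge (b 0) (b 3), x⟫) • wedge (b 0) (b 3)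
        + (2 * ⟪wedge (b 1) (b 2), x⟫) • wedge (b 1) (b 2)
        + (2 * ⟪wedge (b 3) (b 1), x⟫) • wedge (b 3) (b 1)
        + (2 * ⟪wedge (b 2) (b 3), x⟫) • wedge (b 2) (b 3) := by
    intro x
    conv_lhs => rw [← hTid x]
    simp only [hTdef, LinearMap.add_apply, LinearMap.smul_apply,
      LinearMap.smulRight_apply, innerₛₗ_apply_apply]
    module
  -- hodge on basis wedges
  obtain ⟨hd1, hd2, hd3⟩ := hodge_wedge b hb
  have hd1' : hodge (wedge (b 2) (b 3)) = wedge (b 0) (b 1) := by rw [← hd1, hodge_hodge]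
  have hd2' : hodge (wedge (b 3) (b 1)) = wedge (b 0) (b 2) := by rw [← hd2, hodge_hodge]
  have hd3' : hodge (wedge (b 1) (b 2)) = wedge (b 0) (b 3) := by rw [← hd3, hodge_hodge]
  set S1 : L := wedge (b 0) (b 1) + wedge (b 2) (b 3) with hS1def
  set S2 : L := wedge (b 0) (b 2) + wedge (b 3) (b 1) with hS2def
  set S3 : L := wedge (b 0) (b 3) + wedge (b 1) (b 2) with hS3def
  -- expansion of self-dual elements
  have selfdual : ∀ z : L, hodge z = z →
      z = (2 * ⟪wedge (b 0) (b 1), z⟫) • S1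
        + (2 * ⟪wedge (b 0) (b 2), z⟫) • S2
        + (2 * ⟪wedge (b 0) (b 3), z⟫) • S3 := by
    intro z hz
    have h1 := expand z
    have h2 : z = (2 * ⟪wedge (b 0) (b 1), z⟫) • wedge (b 2) (b 3)
        + (2 * ⟪wedge (b 0) (b 2), z⟫) • wedge (b 3) (b 1)
        + (2 * ⟪wedge (b 0) (b 3), z⟫) • wedge (b 1) (b 2)
        + (2 * ⟪wedge (b 1) (b 2), z⟫) • wedge (b 0) (b 3)
        + (2 * ⟪wedge (b 3) (b 1), z⟫) • wedge (b 0) (b 2)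
        + (2 * ⟪wedge (b 2) (b 3), z⟫) • wedge (b 0) (b 1) := by
      calc z = hodge z := hz.symm
        _ = _ := by
          nth_rewrite 1 [h1]
          simp only [map_add, map_smul, hd1, hd2, hd3, hd1', hd2', hd3']
    have e1 : ⟪wedge (b 2) (b 3), z⟫ = ⟪wedge (b 0) (b 1), z⟫ := by
      have h4 := congrArg (fun y => ⟪wedge (b 2) (b 3), y⟫) (h1.symm.trans h2)
      simp only [inner_add_right, real_inner_smul_right, hw] at h4
      simp at h4
      linarith
    have e2 : ⟪wedge (b 3) (b 1), z⟫ = ⟪wedge (b 0) (b 2), z⟫ := by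
      have h4 := congrArg (fun y => ⟪wedge (b 3) (b 1), y⟫) (h1.symm.trans h2)
      simp only [inner_add_right, real_inner_smul_right, hw] at h4
      simp at h4
      linarith
    have e3 : ⟪wedge (b 1) (b 2), z⟫ = ⟪wedge (b 0) (b 3), z⟫ := by
      have h4 := congrArg (fun y => ⟪wedge (b 1) (b 2), y⟫) (h1.symm.trans h2)
      simp only [inner_add_right, real_inner_smul_right, hw] at h4
      simp at h4
      linarith
    nth_rewrite 1 [h1]
    rw [e1, e2, e3, hS1def, hS2def, hS3def]
    module
  obtain ⟨a1, a2, a3, hσS⟩ :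
      ∃ x1 x2 x3 : ℝ, σ = x1 • S1 + x2 • S2 + x3 • S3 :=
    ⟨_, _, _, selfdual σ hσ⟩
  obtain ⟨t1, t2, t3, hVS⟩ :
      ∃ x1 x2 x3 : ℝ, V' = x1 • S1 + x2 • S2 + x3 • S3 :=
    ⟨_, _, _, selfdual V' hV'⟩
  -- the inner-product table
  have tbl : ∀ (x1 x2 x3 : ℝ) (z : L),
      z = x1 • S1 + x2 • S2 + x3 • S3 →
      ∀ i j : Fin 4, ⟪z, wedge (b i) (b j)⟫ = (1/2) * stmt4cmat x1 x2 x3 i j := by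
    rintro x1 x2 x3 z rfl i j
    fin_cases i <;> fin_cases j <;>
      simp [stmt4cmat, hS1def, hS2def, hS3def, inner_add_left,
        real_inner_smul_left, hw, -inner_self_eq_norm_sq_to_K] <;> ring
  have hσw := tbl a1 a2 a3 σ hσS
  have hvw := tbl t1 t2 t3 V' hVS
  -- the constraints
  have hnorm : a1^2 + a2^2 + a3^2 = 1 := by
    have h1 : ⟪σ, σ⟫ = 1 := by rw [real_inner_self_eq_norm_sq, hσ1]; norm_num
    nth_rewrite 2 [hσS] at h1
    rw [hS1def, hS2def, hS3def] at h1
    simp only [inner_add_right, real_inner_smul_right, hσw, stmt4cmat] at h1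
    norm_num [Matrix.cons_val_two, Matrix.cons_val_three] at h1
    linear_combination h1
  have horth : a1 * t1 + a2 * t2 + a3 * t3 = 0 := by
    have h1 := hV'σ
    rw [hσS] at h1
    rw [hS1def, hS2def, hS3def] at h1
    simp only [inner_add_right, real_inner_smul_right, hvw, stmt4cmat] at h1
    norm_num [Matrix.cons_val_two, Matrix.cons_val_three] at h1
    linear_combination h1
  -- self-duality of the frame and the cross product table
  have hS1 : hodge S1 = S1 := by rw [hS1def, map_add, hd1, hd1', add_comm]
  have hS2 : hodge S2 = S2 := by rw [hS2def, map_add, hd2, hd2', add_comm]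
  have hS3 : hodge S3 = S3 := by rw [hS3def, map_add, hd3, hd3', add_comm]
  have crossself : ∀ x : L, hodge x = x → cross x x = 0 := by
    intro x hx
    have h := hcross_antisymm x x hx hx
    have h2 : (2:ℝ) • cross x x = 0 := by
      rw [two_smul]; nth_rewrite 1 [h]; simp
    exact (smul_eq_zero.mp h2).resolve_left (by norm_num)
  obtain ⟨cr1, cr2, cr3⟩ := hcross_basis b hb
  rw [← hS1def, ← hS2def, ← hS3def] at cr1 cr2 cr3
  have cr1' := hcross_antisymm _ _ hS2 hS1
  have cr2' := hcross_antisymm _ _ hS3 hS2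
  have cr3' := hcross_antisymm _ _ hS1 hS3
  rw [cr1] at cr1'
  rw [cr2] at cr2'
  rw [cr3] at cr3'
  have c11 := crossself _ hS1
  have c22 := crossself _ hS2
  have c33 := crossself _ hS3
  have hcv : cross σ V' = (a2*t3 - a3*t2) • S1 + (a3*t1 - a1*t3) • S2
      + (a1*t2 - a2*t1) • S3 := by
    rw [hσS, hVS]
    simp only [map_add, map_smul, LinearMap.add_apply, LinearMap.smul_apply,
      cr1, cr2, cr3, cr1', cr2', cr3', c11, c22, c33, smul_zero, smul_neg,
      add_zero, zero_add]
    module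
  have hcw := tbl _ _ _ _ hcv
  -- K on basis vectors
  have hKj : ∀ j : Fin 4, K (b j) = ∑ k, (stmt4cmat a1 a2 a3 j k) • b k := by
    intro j
    conv_lhs => rw [← b.sum_repr' (K (b j))]
    refine Finset.sum_congr rfl fun k _ => ?_
    have : ⟪b k, K (b j)⟫ = stmt4cmat a1 a2 a3 j k := by
      rw [real_inner_comm, hK, hσw j k]; ring
    rw [this]
  -- main per-pair identities
  have main1 : ∀ i j : Fin 4,
      ⟪cross σ V', wedge (b i) (K (b j))⟫ = ⟪V', wedge (b i) (b j)⟫ := by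
    intro i j
    rw [hKj j]
    simp only [map_sum, map_smul, inner_sum, real_inner_smul_right]
    rw [Fin.sum_univ_four, hcw i 0, hcw i 1, hcw i 2, hcw i 3, hvw i j]
    fin_cases i <;> fin_cases j
    · simp [stmt4cmat]
      try ring
    · simp only [stmt4cmat]
      norm_num [Matrix.cons_val_two, Matrix.cons_val_three]
      linear_combination ((t1)/2) * hnorm + ((-a1)/2) * horth
    · simp only [stmt4cmat]
      norm_num [Matrix.cons_val_two, Matrix.cons_val_three]
      linear_combination ((t2)/2) * hnorm + ((-a2)/2) * horth
    · simp only [stmt4cmat]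
      norm_num [Matrix.cons_val_two, Matrix.cons_val_three]
      linear_combination ((t3)/2) * hnorm + ((-a3)/2) * horth
    · simp only [stmt4cmat]
      norm_num [Matrix.cons_val_two, Matrix.cons_val_three]
      linear_combination ((-t1)/2) * hnorm + ((a1)/2) * horth
    · simp [stmt4cmat]
      try ring
    · simp only [stmt4cmat]
      norm_num [Matrix.cons_val_two, Matrix.cons_val_three]
      linear_combination ((t3)/2) * hnorm + ((-a3)/2) * horth
    · simp only [stmt4cmat]
      norm_num [Matrix.cons_val_two, Matrix.cons_val_three]
      linear_combination ((-t2)/2) * hnorm + ((a2)/2) * horth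
    · simp only [stmt4cmat]
      norm_num [Matrix.cons_val_two, Matrix.cons_val_three]
      linear_combination ((-t2)/2) * hnorm + ((a2)/2) * horth
    · simp only [stmt4cmat]
      norm_num [Matrix.cons_val_two, Matrix.cons_val_three]
      linear_combination ((-t3)/2) * hnorm + ((a3)/2) * horth
    · simp [stmt4cmat]
      try ring
    · simp only [stmt4cmat]
      norm_num [Matrix.cons_val_two, Matrix.cons_val_three]
      linear_combination ((t1)/2) * hnorm + ((-a1)/2) * horth
    · simp only [stmt4cmat]
      norm_num [Matrix.cons_val_two, Matrix.cons_val_three]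
      linear_combination ((-t3)/2) * hnorm + ((a3)/2) * horth
    · simp only [stmt4cmat]
      norm_num [Matrix.cons_val_two, Matrix.cons_val_three]
      linear_combination ((t2)/2) * hnorm + ((-a2)/2) * horth
    · simp only [stmt4cmat]
      norm_num [Matrix.cons_val_two, Matrix.cons_val_three]
      linear_combination ((-t1)/2) * hnorm + ((a1)/2) * horth
    · simp [stmt4cmat]
      try ring
  have main2 : ∀ i j : Fin 4,
      ⟪cross σ V', wedge (K (b i)) (b j)⟫ = ⟪V', wedge (b i) (b j)⟫ := by
    intro i j
    rw [hKj i]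
    simp only [map_sum, map_smul, LinearMap.sum_apply, LinearMap.smul_apply,
      inner_sum, real_inner_smul_right]
    rw [Fin.sum_univ_four, hcw 0 j, hcw 1 j, hcw 2 j, hcw 3 j, hvw i j]
    fin_cases i <;> fin_cases j
    · simp [stmt4cmat]
      try ring
    · simp only [stmt4cmat]
      norm_num [Matrix.cons_val_two, Matrix.cons_val_three]
      linear_combination ((t1)/2) * hnorm + ((-a1)/2) * horth
    · simp only [stmt4cmat]
      norm_num [Matrix.cons_val_two, Matrix.cons_val_three]
      linear_combination ((t2)/2) * hnorm + ((-a2)/2) * horth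
    · simp only [stmt4cmat]
      norm_num [Matrix.cons_val_two, Matrix.cons_val_three]
      linear_combination ((t3)/2) * hnorm + ((-a3)/2) * horth
    · simp only [stmt4cmat]
      norm_num [Matrix.cons_val_two, Matrix.cons_val_three]
      linear_combination ((-t1)/2) * hnorm + ((a1)/2) * horth
    · simp [stmt4cmat]
      try ring
    · simp only [stmt4cmat]
      norm_num [Matrix.cons_val_two, Matrix.cons_val_three]
      linear_combination ((t3)/2) * hnorm + ((-a3)/2) * horth
    · simp only [stmt4cmat]
      norm_num [Matrix.cons_val_two, Matrix.cons_val_three]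
      linear_combination ((-t2)/2) * hnorm + ((a2)/2) * horth
    · simp only [stmt4cmat]
      norm_num [Matrix.cons_val_two, Matrix.cons_val_three]
      linear_combination ((-t2)/2) * hnorm + ((a2)/2) * horth
    · simp only [stmt4cmat]
      norm_num [Matrix.cons_val_two, Matrix.cons_val_three]
      linear_combination ((-t3)/2) * hnorm + ((a3)/2) * horth
    · simp [stmt4cmat]
      try ring
    · simp only [stmt4cmat]
      norm_num [Matrix.cons_val_two, Matrix.cons_val_three]
      linear_combination ((t1)/2) * hnorm + ((-a1)/2) * horth
    · simp only [stmt4cmat]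
      norm_num [Matrix.cons_val_two, Matrix.cons_val_three]
      linear_combination ((-t3)/2) * hnorm + ((a3)/2) * horth
    · simp only [stmt4cmat]
      norm_num [Matrix.cons_val_two, Matrix.cons_val_three]
      linear_combination ((t2)/2) * hnorm + ((-a2)/2) * horth
    · simp only [stmt4cmat]
      norm_num [Matrix.cons_val_two, Matrix.cons_val_three]
      linear_combination ((-t1)/2) * hnorm + ((a1)/2) * horth
    · simp [stmt4cmat]
      try ring
  intro X Y
  constructor
  · rw [← b.sum_repr' X, ← b.sum_repr' Y]
    simp only [map_sum, map_smul, LinearMap.sum_apply, LinearMap.smul_apply,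
      inner_sum, sum_inner, real_inner_smul_left, real_inner_smul_right, main1]
  · rw [← b.sum_repr' X, ← b.sum_repr' Y]
    simp only [map_sum, map_smul, LinearMap.sum_apply, LinearMap.smul_apply,
      inner_sum, sum_inner, real_inner_smul_left, real_inner_smul_right, main2]
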